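/- For every real number a ≥ 0, the set E_{>a} = {f ∈ C(𝕀) : h_top(f) > a} is not convex as a subset of the Banach space C(𝕀,ℝ): there exist f, g ∈ E_{>a} such that (1/2)f + (1/2)g ∉ E_{>a}. In fact, there exists f ∈ C(𝕀) with f(1/2 − x) = f(1/2 + x) for all x ∈ [0,1/2] and h_top(f) > a, and for such f the map g = 1 − f satisfies h_top(g) = h_top(f) > a while (1/2)f + (1/2)g is the constant map 1/2, which has entropy 0. -/

import Mathlib

open unitInterval

/-- The topological entropy of a continuous self-map of the unit interval. -/
noncomputable def htop (f : C(I, I)) : EReal :=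
  Dynamics.coverEntropy ⇑f Set.univ

/-- The convex combination `(1/2) f + (1/2) g` of two interval maps. -/
noncomputable def midMap (f g : C(I, I)) : C(I, I) :=
  ⟨fun x => ⟨((f x : ℝ) + (g x : ℝ)) / 2, by
      have hf := (f x).2
      have hg := (g x).2
      rw [Set.mem_Icc] at hf hg ⊢
      constructor <;> [linarith [hf.1, hg.1]; linarith [hf.2, hg.2]]⟩,
    by
      apply Continuous.subtype_mk
      fun_prop⟩

open Real Dynamics UniformSpace Filter ENNReal Set

/-! ### The tent-like map `x ↦ |cos (π N x)|` and its basic properties -/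

/-- The real-valued version of the `N`-fold tent-like map. -/
noncomputable def freal (N : ℕ) (t : ℝ) : ℝ := |Real.cos (π * N * t)|

lemma freal_mem (N : ℕ) (t : ℝ) : freal N t ∈ I :=
  ⟨abs_nonneg _, Real.abs_cos_le_one _⟩

/-- The `N`-fold tent-like map as a continuous self-map of the unit interval. -/
noncomputable def tent (N : ℕ) : C(I, I) :=
  ⟨fun x => ⟨freal N x, freal_mem N x⟩, by
    apply Continuous.subtype_mk
    unfold freal
    fun_prop⟩

lemma tent_val (N : ℕ) (x : I) : ((tent N x : I) : ℝ) = freal N (x : ℝ) := rfl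

lemma abs_cos_nat_mul_pi_add (j : ℕ) (t : ℝ) : |Real.cos (j * π + t)| = |Real.cos t| := by
  induction j with
  | zero => simp
  | succ j ih =>
    have h : ((j : ℝ) + 1) * π + t = (j * π + t) + π := by ring
    rw [Nat.cast_succ, h, Real.cos_add_pi, abs_neg, ih]

/-- The `j`-th inverse branch of the tent-like map. -/
noncomputable def br (N : ℕ) (j : ℕ) (y : ℝ) : ℝ := ((j : ℝ) * π + Real.arccos y) / (π * N)

/-- The point whose itinerary under the tent-like map follows the word `l`. -/
noncomputable def pt (N : ℕ) : List (Fin N) → ℝ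
  | [] => 1
  | j :: l => br N j (pt N l)

lemma br_mem_lap {N : ℕ} (hN : 1 ≤ N) (j : Fin N) {y : ℝ} (hy : y ∈ Set.Icc (0:ℝ) 1) :
    br N j y ∈ Set.Icc ((j : ℝ) / N) ((j : ℝ) / N + 1 / (2 * N)) := by
  have hπ := Real.pi_pos
  have hNR : (1:ℝ) ≤ N := by exact_mod_cast hN
  have h0 : 0 ≤ Real.arccos y := Real.arccos_nonneg y
  have h1 : Real.arccos y ≤ π / 2 := (Real.arccos_le_pi_div_two).2 hy.1
  unfold br
  constructor
  · rw [div_le_div_iff₀ (by positivity) (by positivity)]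
    nlinarith
  · rw [div_le_iff₀ (by positivity)]
    have h : ((j:ℝ)/N + 1/(2*N)) * (π * N) = j * π + π/2 := by field_simp
    rw [h]
    linarith

lemma lap_subset {N : ℕ} (hN : 1 ≤ N) (j : Fin N) :
    Set.Icc ((j : ℝ) / N) ((j : ℝ) / N + 1 / (2 * N)) ⊆ Set.Icc (0:ℝ) 1 := by
  have hNR : (1:ℝ) ≤ N := by exact_mod_cast hN
  have hj : (j : ℝ) ≤ (N : ℝ) - 1 := by
    have h := j.isLt
    have h' : (j : ℝ) + 1 ≤ N := by exact_mod_cast h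
    linarith
  intro x hx
  obtain ⟨hx1, hx2⟩ := hx
  constructor
  · have : (0:ℝ) ≤ (j:ℝ)/N := by positivity
    linarith
  · have h2 : (j:ℝ)/N + 1/(2*N) ≤ 1 := by
      rw [div_add_div _ _ (by positivity) (by positivity), div_le_one (by positivity)]
      nlinarith
    linarith

lemma pt_mem {N : ℕ} (hN : 1 ≤ N) (l : List (Fin N)) : pt N l ∈ Set.Icc (0:ℝ) 1 := by
  induction l with
  | nil => simp [pt]
  | cons j l ih => exact lap_subset hN j (br_mem_lap hN j ih)

lemma pt_lap {N : ℕ} (hN : 1 ≤ N) (j : Fin N) (l : List (Fin N)) :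
    pt N (j :: l) ∈ Set.Icc ((j : ℝ) / N) ((j : ℝ) / N + 1 / (2 * N)) :=
  br_mem_lap hN j (pt_mem hN l)

lemma freal_br {N : ℕ} (hN : 1 ≤ N) (j : ℕ) {y : ℝ} (hy : y ∈ Set.Icc (0:ℝ) 1) :
    freal N (br N j y) = y := by
  have hNπ : π * (N:ℝ) ≠ 0 := by
    have := Real.pi_pos
    have hNR : (1:ℝ) ≤ N := by exact_mod_cast hN
    positivity
  unfold freal br
  rw [mul_comm (π * (N:ℝ)), div_mul_cancel₀ _ hNπ, abs_cos_nat_mul_pi_add,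
    Real.cos_arccos (by linarith [hy.1]) hy.2, abs_of_nonneg hy.1]

lemma freal_iter {N : ℕ} (hN : 1 ≤ N) (l l' : List (Fin N)) :
    (freal N)^[l.length] (pt N (l ++ l')) = pt N l' := by
  induction l with
  | nil => simp
  | cons j l ih =>
    rw [List.length_cons, Function.iterate_succ_apply, List.cons_append]
    rw [show pt N (j :: (l ++ l')) = br N j (pt N (l ++ l')) from rfl] at *
    rw [show (freal N) (br N (↑j) (pt N (l ++ l'))) = pt N (l ++ l') from
      freal_br hN j (pt_mem hN _)]
    exact ih

lemma freal_iter_lap {N : ℕ} (hN : 1 ≤ N) {n k : ℕ} (w : Fin n → Fin N) (hk : k < n) :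
    (freal N)^[k] (pt N (List.ofFn w)) ∈
      Set.Icc ((w ⟨k, hk⟩ : ℝ) / N) ((w ⟨k, hk⟩ : ℝ) / N + 1 / (2 * N)) := by
  have hlen : (List.ofFn w).length = n := List.length_ofFn
  have hlt : k < (List.ofFn w).length := by omega
  have htake : ((List.ofFn w).take k).length = k := by
    rw [List.length_take]; omega
  have key := freal_iter hN ((List.ofFn w).take k) ((List.ofFn w).drop k)
  rw [htake, List.take_append_drop] at key
  have hdrop : (List.ofFn w).drop k = w ⟨k, hk⟩ :: (List.ofFn w).drop (k + 1) := by
    rw [List.drop_eq_getElem_cons hlt, List.getElem_ofFn]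
  rw [key, hdrop]
  exact pt_lap hN _ _

lemma tent_iter_val (N : ℕ) (x : I) (k : ℕ) :
    (((tent N)^[k] x : I) : ℝ) = (freal N)^[k] (x : ℝ) := by
  induction k with
  | zero => simp
  | succ k ih =>
    rw [Function.iterate_succ_apply', Function.iterate_succ_apply', ← ih]
    rfl

lemma lap_sep {N : ℕ} (hN : 1 ≤ N) {u v : Fin N} (huv : (u : ℕ) < (v : ℕ)) {x y : ℝ}
    (hx : x ∈ Set.Icc ((u : ℝ) / N) ((u : ℝ) / N + 1 / (2 * N)))
    (hy : y ∈ Set.Icc ((v : ℝ) / N) ((v : ℝ) / N + 1 / (2 * N))) :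
    1 / (2 * N) ≤ |x - y| := by
  have hNR : (1:ℝ) ≤ N := by exact_mod_cast hN
  have huv' : (u : ℝ) + 1 ≤ (v : ℝ) := by exact_mod_cast huv
  have h1 : x ≤ (u : ℝ) / N + 1 / (2 * N) := hx.2
  have h2 : (v : ℝ) / N ≤ y := hy.1
  have key : 1 / (2 * N) ≤ y - x := by
    have hdiff : (u : ℝ) / N + 1 / N ≤ (v : ℝ) / N := by
      rw [← add_div, div_le_div_iff₀ (by positivity) (by positivity)]
      nlinarith
    have h : (1:ℝ) / N - 1 / (2 * N) = 1 / (2 * N) := by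
      field_simp
      ring
    linarith
  have hpos : (0:ℝ) < 1/(2*N) := by positivity
  rw [abs_sub_comm, abs_of_nonneg (by linarith)]
  linarith

/-- The point of the unit interval with itinerary `w`. -/
noncomputable def wpoint {N : ℕ} (hN : 1 ≤ N) {n : ℕ} (w : Fin n → Fin N) : I :=
  ⟨pt N (List.ofFn w), pt_mem hN (List.ofFn w)⟩

lemma wpoint_sep {N : ℕ} (hN : 1 ≤ N) {n : ℕ} {w w' : Fin n → Fin N} (hww : w ≠ w') :
    ∃ k < n, 1 / (2 * (N:ℝ)) ≤
      |(((tent N)^[k] (wpoint hN w) : I) : ℝ) - (((tent N)^[k] (wpoint hN w') : I) : ℝ)| := by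
  obtain ⟨k, hk⟩ : ∃ k, w k ≠ w' k := Function.ne_iff.1 hww
  refine ⟨k, k.isLt, ?_⟩
  rw [wpoint, wpoint, tent_iter_val, tent_iter_val]
  have h1 := freal_iter_lap hN w k.isLt
  have h2 := freal_iter_lap hN w' k.isLt
  simp only [Fin.eta] at h1 h2
  rcases Nat.lt_or_ge (w k : ℕ) (w' k : ℕ) with h | h
  · exact lap_sep hN h h1 h2
  · have hlt : (w' k : ℕ) < (w k : ℕ) := by
      rcases Nat.lt_or_ge (w' k : ℕ) (w k : ℕ) with h' | h'
      · exact h'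
      · exact absurd (Fin.ext (Nat.le_antisymm h h')) hk.symm
    rw [abs_sub_comm]
    exact lap_sep hN hlt h2 h1

lemma wpoint_inj {N : ℕ} (hN : 1 ≤ N) {n : ℕ} :
    Function.Injective (fun w : Fin n → Fin N => wpoint hN w) := by
  intro w w' h
  by_contra hww
  obtain ⟨k, -, hsep⟩ := wpoint_sep hN hww
  simp only at h
  rw [h, sub_self, abs_zero] at hsep
  have hNR : (1:ℝ) ≤ N := by exact_mod_cast hN
  have : (0:ℝ) < 1 / (2 * N) := by positivity
  linarith

lemma isDynNetIn_wpoints {N : ℕ} (hN : 1 ≤ N) (n : ℕ) :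
    IsDynNetIn (tent N) Set.univ {p : I × I | dist p.1 p.2 < 1 / (4 * N)} n
      ↑(Finset.image (fun w : Fin n → Fin N => wpoint hN w) Finset.univ) := by
  constructor
  · exact Set.subset_univ _
  · intro x hx y hy hxy
    simp only [Finset.coe_image, Finset.coe_univ, Set.image_univ, Set.mem_range] at hx hy
    obtain ⟨w, rfl⟩ := hx
    obtain ⟨w', rfl⟩ := hy
    have hww : w ≠ w' := fun h => hxy (by rw [h])
    rw [Function.onFun]
    rw [Set.disjoint_left]
    intro z hz1 hz2
    rw [mem_ball_dynEntourage] at hz1 hz2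
    obtain ⟨k, hk, hsep⟩ := wpoint_sep hN hww
    have h1 := hz1 k hk
    have h2 := hz2 k hk
    simp only [UniformSpace.ball, Set.mem_preimage, Set.mem_setOf_eq] at h1 h2
    rw [Subtype.dist_eq, Real.dist_eq] at h1 h2
    have htri : |(((tent N)^[k] (wpoint hN w) : I) : ℝ) -
        (((tent N)^[k] (wpoint hN w') : I) : ℝ)| ≤
        |(((tent N)^[k] (wpoint hN w) : I) : ℝ) - (((tent N)^[k] z : I) : ℝ)| +
        |(((tent N)^[k] z : I) : ℝ) - (((tent N)^[k] (wpoint hN w') : I) : ℝ)| :=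
      abs_sub_le _ _ _
    rw [abs_sub_comm] at h2
    have hNR : (1:ℝ) ≤ N := by exact_mod_cast hN
    have hhalf : 1 / (4 * (N:ℝ)) + 1 / (4 * N) ≤ 1 / (2 * N) := by
      rw [div_add_div _ _ (by positivity) (by positivity)]
      rw [div_le_div_iff₀ (by positivity) (by positivity)]
      ring_nf
      nlinarith
    linarith

lemma netMaxcard_ge {N : ℕ} (hN : 1 ≤ N) (n : ℕ) :
    ((N ^ n : ℕ) : ℕ∞) ≤
      netMaxcard (tent N) Set.univ {p : I × I | dist p.1 p.2 < 1 / (4 * N)} n := by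
  have hcard : (Finset.image (fun w : Fin n → Fin N => wpoint hN w) Finset.univ).card
      = N ^ n := by
    rw [Finset.card_image_of_injective _ (wpoint_inj hN), Finset.card_univ]
    simp [Fintype.card_fun]
  have h := (isDynNetIn_wpoints hN n).card_le_netMaxcard
  rwa [hcard] at h

lemma log_le_coverEntropy_tent {N : ℕ} (hN : 1 ≤ N) :
    (Real.log N : EReal) ≤ Dynamics.coverEntropy ⇑(tent N) Set.univ := by
  have hNR : (1:ℝ) ≤ N := by exact_mod_cast hN
  set U : Set (I × I) := {p : I × I | dist p.1 p.2 < 1 / (4 * N)} with hU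
  have hUuni : U ∈ uniformity I := Metric.dist_mem_uniformity (by positivity)
  refine le_trans ?_ (netEntropyEntourage_le_coverEntropy (tent N) Set.univ hUuni)
  rw [netEntropyEntourage]
  apply le_limsup_of_frequently_le'
  apply Eventually.frequently
  rw [eventually_atTop]
  refine ⟨1, fun n hn => ?_⟩
  have hlog : ((n : ℕ) : EReal) * (Real.log N : EReal) ≤
      ENNReal.log (netMaxcard (tent N) Set.univ U n) := by
    have h1 := ENNReal.log_monotone (ENat.toENNReal_le.2 (netMaxcard_ge hN n))
    refine le_trans (le_of_eq ?_) h1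
    rw [ENat.toENNReal_coe, Nat.cast_pow, ENNReal.log_pow,
      ENNReal.log_pos_real' (by simp; positivity)]
    simp
  have hne : ((n : ℕ) : ℝ) ≠ 0 := Nat.cast_ne_zero.2 (by omega)
  calc (Real.log N : EReal)
      = (((n : ℕ) : EReal) * (Real.log N : EReal)) / ((n : ℕ) : EReal) := by
        have hc : ((n : ℕ) : EReal) = (((n : ℕ) : ℝ) : EReal) := by norm_cast
        rw [hc, ← EReal.coe_mul, ← EReal.coe_div]
        congr 1
        rw [mul_comm, mul_div_assoc, div_self hne, mul_one]
    _ ≤ _ := EReal.monotone_div_right_of_nonneg (Nat.cast_nonneg' n) hlog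

/-! ### Constant maps have zero entropy -/

lemma const_iterate {c : I} {T : I → I} (hT : ∀ x, T x = c) {k : ℕ} (hk : 1 ≤ k) (z : I) :
    T^[k] z = c := by
  obtain ⟨m, rfl⟩ := Nat.exists_eq_add_of_le hk
  rw [add_comm, Function.iterate_succ_apply']
  exact hT _

lemma coverEntropy_const_zero {c : I} {T : I → I} (hT : ∀ x, T x = c) :
    Dynamics.coverEntropy T Set.univ = 0 := by
  refine le_antisymm ?_ (coverEntropy_nonneg T univ_nonempty)
  refine iSup₂_le fun U U_uni => ?_
  rcases comp_symm_mem_uniformity_sets U_uni with ⟨V, V_uni, V_symm, V_U⟩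
  refine le_trans (coverEntropyEntourage_antitone T Set.univ V_U) ?_
  have hfin : coverMincard T Set.univ V 1 < ⊤ :=
    coverMincard_finite_of_isCompact_invariant isCompact_univ (mapsTo_univ T _) V_uni 1
  obtain ⟨s, s_cover, s_card⟩ := (coverMincard_finite_iff T Set.univ V 1).1 hfin
  have hcov : ∀ n : ℕ, IsDynCoverOf T Set.univ V n s := by
    intro n x _
    obtain ⟨y, hy, hxy⟩ := s_cover (mem_univ x)
    refine ⟨y, hy, ?_⟩
    rw [mem_dynEntourage] at hxy ⊢
    intro k hk
    rcases Nat.eq_zero_or_pos k with rfl | hk1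
    · simpa using hxy 0 (by norm_num)
    · rw [const_iterate hT hk1, const_iterate hT hk1]
      exact refl_mem_uniformity V_uni
  have hbound : ∀ n : ℕ, 0 < n →
      coverEntropyEntourage T Set.univ (SetRel.comp V V) ≤
        ENNReal.log (s.card : ℝ≥0∞) / (n : EReal) := by
    intro n hn
    exact (hcov n).coverEntropyEntourage_le_log_card_div (mapsTo_univ T _) hn.ne'
  have hne_top : ENNReal.log (s.card : ℝ≥0∞) ≠ ⊤ := by
    simp [ENNReal.log_eq_top_iff]
  have hne_bot : ENNReal.log (s.card : ℝ≥0∞) ≠ ⊥ := by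
    rw [ne_eq, ENNReal.log_eq_bot_iff]
    simp only [Nat.cast_eq_zero]
    intro h
    have hne := s_cover.nonempty univ_nonempty
    simp [h, Finset.card_eq_zero.1 h] at hne
  have htend : Tendsto (fun n : ℕ => ENNReal.log (s.card : ℝ≥0∞) / (n : EReal)) atTop (nhds 0) :=
    EReal.tendsto_const_div_atTop_nhds_zero_nat hne_bot hne_top
  exact ge_of_tendsto htend (eventually_atTop.2 ⟨1, fun n hn => hbound n hn⟩)

/-! ### Symmetry of the tent-like map -/

lemma freal_one_sub (N : ℕ) (t : ℝ) : freal N (1 - t) = freal N t := by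
  unfold freal
  have h : π * N * (1 - t) = (N : ℝ) * π + -(π * N * t) := by ring
  rw [h, abs_cos_nat_mul_pi_add, Real.cos_neg]

lemma tent_symm (N : ℕ) (x : I) : tent N (σ x) = tent N x := by
  apply Subtype.ext
  rw [tent_val, tent_val, coe_symm_eq, freal_one_sub]

set_option maxHeartbeats 1000000 in
/-- For every real `a ≥ 0`, the set `E_{> a}` is not convex: there are `f, g` with entropy
`> a` whose midpoint `(1/2) f + (1/2) g` does not have entropy `> a`. In fact, there is an
`f` with `f(1 - x) = f(x)` and entropy `> a`; for such an `f`, the map `g = 1 - f` has the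
same entropy as `f`, while `(1/2) f + (1/2) g` is the constant map `1/2`, whose entropy
is `0`. -/
theorem E_gt_not_convex (a : ℝ) (ha : 0 ≤ a) :
    (∃ f g : C(I, I), (a : EReal) < htop f ∧ (a : EReal) < htop g ∧
      ¬ (a : EReal) < htop (midMap f g)) ∧
    ∃ f : C(I, I), (∀ x : I, f (σ x) = f x) ∧ (a : EReal) < htop f ∧
      ∀ g : C(I, I), (∀ x : I, (g x : ℝ) = 1 - (f x : ℝ)) →
        htop g = htop f ∧ (a : EReal) < htop g ∧
        (∀ x : I, (midMap f g x : ℝ) = 1 / 2) ∧ htop (midMap f g) = 0 := by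
  have main : ∃ f : C(I, I), (∀ x : I, f (σ x) = f x) ∧ (a : EReal) < htop f ∧
      ∀ g : C(I, I), (∀ x : I, (g x : ℝ) = 1 - (f x : ℝ)) →
        htop g = htop f ∧ (a : EReal) < htop g ∧
        (∀ x : I, (midMap f g x : ℝ) = 1 / 2) ∧ htop (midMap f g) = 0 := by
    set N : ℕ := ⌈Real.exp a⌉₊ + 1 with hNdef
    have hN : 1 ≤ N := Nat.le_add_left 1 _
    have hNR : (0:ℝ) < N := by positivity
    have haN : (a : EReal) < htop (tent N) := by
      have h1 : Real.exp a < N := by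
        refine lt_of_le_of_lt (Nat.le_ceil _) ?_
        exact_mod_cast Nat.lt_succ_self _
      have h2 : a < Real.log N := (Real.lt_log_iff_exp_lt hNR).2 h1
      calc (a : EReal) < (Real.log N : EReal) := by exact_mod_cast h2
        _ ≤ _ := log_le_coverEntropy_tent hN
    refine ⟨tent N, tent_symm N, haN, ?_⟩
    intro g hg
    have hσcont : Continuous (σ : I → I) := continuous_symm
    have hUC : UniformContinuous (σ : I → I) :=
      CompactSpace.uniformContinuous_of_continuous hσcont
    have hσsurj : (σ : I → I) '' Set.univ = Set.univ := by
      rw [Set.image_univ]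
      exact (Function.Involutive.surjective symm_symm).range_eq
    have hgf : htop g = htop (tent N) := by
      refine le_antisymm ?_ ?_
      · have h1 : Function.Semiconj (σ : I → I) ⇑(tent N) ⇑g := by
          intro x
          apply Subtype.ext
          rw [coe_symm_eq, hg (σ x)]
          rw [show ((tent N) (σ x) : ℝ) = ((tent N) x : ℝ) from congrArg _ (tent_symm N x)]
        have h := coverEntropy_image_le_of_uniformContinuous h1 hUC Set.univ
        rwa [hσsurj] at h
      · have h2 : Function.Semiconj (σ : I → I) ⇑g ⇑(tent N) := by
          intro x
          apply Subtype.ext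
          rw [coe_symm_eq, hg x]
          rw [show ((tent N) (σ x) : ℝ) = ((tent N) x : ℝ) from congrArg _ (tent_symm N x)]
          ring
        have h := coverEntropy_image_le_of_uniformContinuous h2 hUC Set.univ
        rwa [hσsurj] at h
    have hmidval : ∀ x : I, (midMap (tent N) g x : ℝ) = 1 / 2 := by
      intro x
      show (((tent N) x : ℝ) + (g x : ℝ)) / 2 = 1 / 2
      rw [hg x]; ring
    refine ⟨hgf, lt_of_lt_of_eq haN hgf.symm, hmidval, ?_⟩
    have hconst : ∀ x : I, midMap (tent N) g x = (⟨1/2, by constructor <;> norm_num⟩ : I) :=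
      fun x => Subtype.ext (hmidval x)
    exact coverEntropy_const_zero hconst
  refine ⟨?_, main⟩
  obtain ⟨f, hsym, hf, hrest⟩ := main
  set g : C(I, I) := ⟨fun x => σ (f x), continuous_symm.comp f.continuous⟩ with hgdef
  have hg : ∀ x : I, (g x : ℝ) = 1 - (f x : ℝ) := fun x => coe_symm_eq _
  obtain ⟨hge, hga, hmid, hmid0⟩ := hrest g hg
  refine ⟨f, g, hf, hga, ?_⟩
  rw [hmid0]
  exact not_lt.2 (by exact_mod_cast ha)
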